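/- For the DoD-stabilized scheme with parameter η and α < λ ≤ 1/2, all entries of the system matrix B_DoD are nonnegative if and only if η ∈ [1 − α/λ, 1]. In particular the three conditions αh − τ(1−η) ≥ 0, τη ≥ 0, and τ(1−η) ≥ 0 are equivalent to 1 − α/λ ≤ η ≤ 1 (noting τη ≥ 0 is implied since 1 − α/λ > 0). -/

import Mathlib

/-- DoD stabilization: all entries of the system matrix `B_DoD` are nonnegative iff
`η ∈ [1 − α/λ, 1]`, where the nontrivial entries give the three conditions
`α h − τ(1−η) ≥ 0`, `τ η ≥ 0`, `τ(1−η) ≥ 0`. -/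
theorem dod_monotone_iff (h τ α lam η : ℝ)
    (hh : 0 < h) (hτ : 0 < τ) (hlam : lam = τ / h)
    (hα0 : 0 < α) (hcut : α < lam) (hlam2 : lam ≤ 1/2) :
    (0 ≤ α * h - τ * (1 - η) ∧ 0 ≤ τ * η ∧ 0 ≤ τ * (1 - η)) ↔
      (1 - α / lam ≤ η ∧ η ≤ 1) := by
  have hlam0 : 0 < lam := lt_trans hα0 hcut
  have hτeq : τ = lam * h := by rw [hlam, div_mul_cancel₀ τ hh.ne']
  constructor
  · rintro ⟨h1, _, h3⟩
    constructor
    · rw [hτeq] at h1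
      have hq : α / lam * lam = α := div_mul_cancel₀ α hlam0.ne'
      nlinarith [mul_pos hlam0 hh]
    · nlinarith
  · rintro ⟨h1, h2⟩
    have hη0 : 0 < η := by
      have : 0 < 1 - α / lam := by
        have := (div_lt_one hlam0).2 hcut
        linarith
      linarith
    refine ⟨?_, by positivity, by nlinarith⟩
    rw [hτeq]
    have : (1 - α / lam) * lam ≤ η * lam := by
      exact mul_le_mul_of_nonneg_right h1 hlam0.le
    have h1' : lam - α ≤ η * lam := by
      field_simp at this; linarith
    nlinarith
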